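/- For n cars all of size 1 and a trailer of length z-1, the number of parking sequences equals z(z+n)^{n-1}. -/

import Mathlib

/-- The first empty spot `j ≥ c`, given the finite set `occ` of occupied spots. -/
def firstFree (occ : Finset ℕ) (c : ℕ) : ℕ :=
  Nat.find (p := fun j => c ≤ j ∧ j ∉ occ)
    (by
      refine ⟨occ.sup id + c + 1, by omega, fun h => ?_⟩
      have := Finset.le_sup (f := id) h
      simp only [id] at this
      omega)

/-- One step of the parking process on spots `1, …, N`: the car with preference and
size `cs = (c, s)` drives to the first empty spot `j ≥ c` and parks in spots
`j, …, j+s-1` if they are all empty and within the `N` spots; otherwise failure. -/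
def parkStep (N : ℕ) (occ : Option (Finset ℕ)) (cs : ℕ × ℕ) : Option (Finset ℕ) :=
  match occ with
  | none => none
  | some occ =>
    let j := firstFree occ cs.1
    if j + cs.2 - 1 ≤ N ∧ ∀ k ∈ Finset.Ico j (j + cs.2), k ∉ occ then
      some (occ ∪ Finset.Ico j (j + cs.2))
    else none

/-- The result of letting cars `C₁, …, Cₙ` of sizes `y` and preferences `c` park in
order on `z - 1 + ∑ y i` spots, where the first `z - 1` spots are occupied by a
trailer: `some occ` records the occupied spots, `none` records failure. -/
def parkFold (n : ℕ) (y : Fin n → ℕ) (z : ℕ) (c : Fin n → ℕ) : Option (Finset ℕ) :=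
  (List.ofFn fun i : Fin n => ((c i, y i) : ℕ × ℕ)).foldl
    (parkStep (z - 1 + ∑ i, y i)) (some (Finset.Ico 1 z))

/-- `(c₁, …, cₙ)` is a parking sequence for car sizes `y` and a trailer of length
`z - 1` if all preferences are genuine spots and all cars park successfully. -/
def IsParkingSeq (n : ℕ) (y : Fin n → ℕ) (z : ℕ) (c : Fin n → ℕ) : Prop :=
  (∀ i, 1 ≤ c i) ∧ parkFold n y z c ≠ none

instance (n : ℕ) (y : Fin n → ℕ) (z : ℕ) : DecidablePred (IsParkingSeq n y z) :=
  fun c => by unfold IsParkingSeq; infer_instance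

/-- The number of parking sequences for car sizes `y` and a trailer of length `z - 1`. -/
def numPark (n : ℕ) (y : Fin n → ℕ) (z : ℕ) : ℕ :=
  ((Fintype.piFinset fun _ : Fin n => Finset.Icc 1 (z - 1 + ∑ i, y i)).filter
    (IsParkingSeq n y z)).card

lemma firstFree_spec (occ : Finset ℕ) (c : ℕ) :
    c ≤ firstFree occ c ∧ firstFree occ c ∉ occ :=
  Nat.find_spec (p := fun j => c ≤ j ∧ j ∉ occ) _

lemma firstFree_min (occ : Finset ℕ) (c x : ℕ) (h1 : c ≤ x) (h2 : x ∉ occ) :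
    firstFree occ c ≤ x :=
  Nat.find_min' _ ⟨h1, h2⟩

lemma firstFree_mem (occ : Finset ℕ) (c x : ℕ) (h1 : c ≤ x) (h2 : x < firstFree occ c) :
    x ∈ occ := by
  by_contra hx
  exact absurd (firstFree_min occ c x h1 hx) (by omega)

lemma parkStep_one (N : ℕ) (occ : Finset ℕ) (c : ℕ) :
    parkStep N (some occ) (c, 1) =
      if firstFree occ c ≤ N then some (insert (firstFree occ c) occ) else none := by
  have h2 := (firstFree_spec occ c).2
  simp only [parkStep, Nat.Ico_succ_singleton]
  rcases le_or_gt (firstFree occ c) N with h | h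
  · rw [if_pos, if_pos h]
    · congr 1
      rw [Finset.union_comm, Finset.insert_eq]
    · exact ⟨by omega, fun k hk => by simp only [Finset.mem_singleton] at hk; subst hk; exact h2⟩
  · rw [if_neg, if_neg (by omega)]
    intro hc
    omega

def myFold (N : ℕ) (occ : Finset ℕ) (L : List ℕ) : Option (Finset ℕ) :=
  (L.map fun c => (c, 1)).foldl (parkStep N) (some occ)

lemma foldl_none (N : ℕ) (L : List (ℕ × ℕ)) : L.foldl (parkStep N) none = none := by
  induction L with
  | nil => rfl
  | cons c L ih => simpa [parkStep] using ih

lemma myFold_cons (N : ℕ) (occ : Finset ℕ) (c : ℕ) (L : List ℕ) :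
    myFold N occ (c :: L) =
      if firstFree occ c ≤ N then myFold N (insert (firstFree occ c) occ) L else none := by
  simp only [myFold, List.map_cons, List.foldl_cons, parkStep_one]
  split
  · rfl
  · exact foldl_none N _

/-- Direction 1: success implies counting bound. -/
lemma succ_bound (N : ℕ) : ∀ (L : List ℕ) (occ occ' : Finset ℕ),
    myFold N occ L = some occ' →
    occ ⊆ occ' ∧ ∀ t, L.countP (fun x => decide (t ≤ x)) ≤
      ((occ' \ occ).filter (fun s => t ≤ s ∧ s ≤ N)).card := by
  intro L
  induction L with
  | nil =>
    intro occ occ' h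
    simp only [myFold, List.map_nil, List.foldl_nil, Option.some_inj] at h
    subst h
    exact ⟨Finset.Subset.refl _, fun t => by simp⟩
  | cons c L ih =>
    intro occ occ' h
    rw [myFold_cons] at h
    split at h
    case isFalse => exact absurd h (by simp)
    case isTrue hjN =>
      set j := firstFree occ c with hj
      have hjc : c ≤ j := (firstFree_spec occ c).1
      have hjocc : j ∉ occ := (firstFree_spec occ c).2
      obtain ⟨hsub, hcnt⟩ := ih _ _ h
      have hocc' : occ ⊆ occ' := fun x hx => hsub (Finset.mem_insert_of_mem hx)
      refine ⟨hocc', fun t => ?_⟩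
      rw [List.countP_cons]
      have key : ∀ s, s ∈ (occ' \ insert j occ).filter (fun s => t ≤ s ∧ s ≤ N) →
          s ∈ (occ' \ occ).filter (fun s => t ≤ s ∧ s ≤ N) := by
        intro s hs
        simp only [Finset.mem_filter, Finset.mem_sdiff, Finset.mem_insert] at hs ⊢
        tauto
      by_cases htc : t ≤ c
      · have hcp : (if decide (t ≤ c) = true then 1 else 0) = 1 := by simp [htc]
        rw [hcp]
        have hct := hcnt t
        have hjmem : j ∈ (occ' \ occ).filter (fun s => t ≤ s ∧ s ≤ N) := by
          simp only [Finset.mem_filter, Finset.mem_sdiff]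
          exact ⟨⟨hsub (Finset.mem_insert_self _ _), hjocc⟩, le_trans htc hjc, hjN⟩
        have hjnot : j ∉ (occ' \ insert j occ).filter (fun s => t ≤ s ∧ s ≤ N) := by
          simp [Finset.mem_insert]
        have : insert j ((occ' \ insert j occ).filter (fun s => t ≤ s ∧ s ≤ N)) ⊆
            (occ' \ occ).filter (fun s => t ≤ s ∧ s ≤ N) := by
          intro s hs
          rcases Finset.mem_insert.mp hs with rfl | hs
          · exact hjmem
          · exact key s hs
        have hcard := Finset.card_le_card this
        rw [Finset.card_insert_of_notMem hjnot] at hcard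
        omega
      · have hcp : (if decide (t ≤ c) = true then 1 else 0) = 0 := by simp [htc]
        rw [hcp]
        have hct := hcnt t
        have := Finset.card_le_card (fun s hs => key s hs)
        omega

/-- Direction 2: counting condition implies success. -/
lemma succ_of_K (N : ℕ) : ∀ (L : List ℕ) (occ : Finset ℕ),
    occ ⊆ Finset.Icc 1 N →
    (∀ c ∈ L, 1 ≤ c) →
    (∀ a, a ≤ N → a ∉ occ →
      (occ.filter (fun s => a < s)).card + L.countP (fun x => decide (a < x)) ≤ N - a) →
    myFold N occ L ≠ none := by
  intro L
  induction L with
  | nil => intro occ _ _ _; simp [myFold]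
  | cons c L ih =>
    intro occ hocc hL hK
    set j := firstFree occ c with hj
    have hjc : c ≤ j := (firstFree_spec occ c).1
    have hjocc : j ∉ occ := (firstFree_spec occ c).2
    have hc1 : 1 ≤ c := hL c List.mem_cons_self
    -- first, j ≤ N
    have hjN : j ≤ N := by
      by_contra hjN
      push_neg at hjN
      -- every x in [c, N] is occupied
      have hfull : ∀ x, c ≤ x → x ≤ N → x ∈ occ := fun x h1 h2 =>
        firstFree_mem occ c x h1 (by omega)
      set S := (Finset.range (N + 1)).filter (fun x => x ∉ occ) with hS
      have h0S : (0 : ℕ) ∈ S := by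
        simp only [hS, Finset.mem_filter, Finset.mem_range]
        refine ⟨by omega, fun h0 => ?_⟩
        have := hocc h0
        simp at this
      set a := S.max' ⟨0, h0S⟩ with ha
      have haS : a ∈ S := Finset.max'_mem _ _
      have haN : a ≤ N := by
        have := (Finset.mem_filter.mp haS).1
        simp only [Finset.mem_range] at this
        omega
      have haocc : a ∉ occ := (Finset.mem_filter.mp haS).2
      have hmax : ∀ x, a < x → x ≤ N → x ∈ occ := by
        intro x h1 h2
        by_contra hx
        have : x ∈ S := by
          simp only [hS, Finset.mem_filter, Finset.mem_range]
          exact ⟨by omega, hx⟩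
        have := Finset.le_max' S x this
        omega
      have hac : a < c := by
        by_contra hca
        push_neg at hca
        have := firstFree_min occ c a hca haocc
        omega
      -- Ioc a N ⊆ occ.filter (a < ·)
      have hsub : Finset.Ioc a N ⊆ occ.filter (fun s => a < s) := by
        intro x hx
        simp only [Finset.mem_Ioc] at hx
        simp only [Finset.mem_filter]
        exact ⟨hmax x hx.1 hx.2, hx.1⟩
      have hcard : N - a ≤ (occ.filter (fun s => a < s)).card := by
        have := Finset.card_le_card hsub
        simpa [Nat.card_Ioc] using this
      have hcnt : 1 ≤ (c :: L).countP (fun x => decide (a < x)) := by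
        rw [List.countP_cons]
        simp [hac]
      have := hK a haN haocc
      omega
    rw [myFold_cons, if_pos hjN]
    apply ih
    · intro x hx
      rcases Finset.mem_insert.mp hx with rfl | hx
      · simp only [Finset.mem_Icc]; omega
      · exact hocc hx
    · exact fun x hx => hL x (List.mem_cons_of_mem c hx)
    · intro a haN ha
      have haocc : a ∉ occ := fun h => ha (Finset.mem_insert_of_mem h)
      have haj : a ≠ j := fun h => ha (h ▸ Finset.mem_insert_self j occ)
      have hK' := hK a haN haocc
      rw [List.countP_cons] at hK'
      have himp : a < j → a < c := by
        intro haj'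
        by_contra hca
        push_neg at hca
        exact haocc (firstFree_mem occ c a hca (by omega))
      by_cases haj' : a < j
      · have hac : a < c := himp haj'
        have hcp : (if decide (a < c) = true then 1 else 0) = 1 := by simp [hac]
        rw [hcp] at hK'
        have : (insert j occ).filter (fun s => a < s) =
            insert j (occ.filter (fun s => a < s)) := by
          rw [Finset.filter_insert, if_pos haj']
        rw [this, Finset.card_insert_of_notMem (fun h => hjocc (Finset.mem_filter.mp h).1)]
        omega
      · have : (insert j occ).filter (fun s => a < s) = occ.filter (fun s => a < s) := by
          rw [Finset.filter_insert, if_neg haj']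
        rw [this]
        split at hK' <;> omega

lemma countP_ofFn {m : ℕ} (c : Fin m → ℕ) (p : ℕ → Bool) :
    (List.ofFn c).countP p = (Finset.univ.filter (fun i => p (c i) = true)).card := by
  induction m with
  | zero => simp
  | succ m ih =>
    rw [List.ofFn_succ, List.countP_cons, ih]
    rw [Finset.card_filter, Finset.card_filter, Fin.sum_univ_succ]
    omega

open Finset

section Cycle
variable {n M : ℕ} [NeZero M]

/-- number of cars whose preference is at circular distance ≤ k below u -/
def cnt (a : Fin n → ZMod M) (u k : ℕ) : ℕ :=
  (univ.filter (fun i => ((u : ZMod M) - a i).val ≤ k)).card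

def condN (M : ℕ) [NeZero M] (a : Fin n → ZMod M) (u : ℕ) : Prop :=
  ∀ k ∈ Finset.range M, cnt a u k ≤ k

instance (a : Fin n → ZMod M) (u : ℕ) : Decidable (condN M a u) := by
  unfold condN; infer_instance

def hfun (a : Fin n → ZMod M) (r : ℕ) : ℕ :=
  (univ.filter (fun i => a i = (r : ZMod M))).card

def Hfun (a : Fin n → ZMod M) (t : ℕ) : ℤ :=
  (t : ℤ) - ∑ r ∈ Finset.range t, (hfun a r : ℤ)

variable (a : Fin n → ZMod M)

lemma hfun_period (r : ℕ) : hfun a (r + M) = hfun a r := by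
  unfold hfun
  congr 1
  apply Finset.filter_congr
  intro i _
  have : ((r + M : ℕ) : ZMod M) = (r : ZMod M) := by
    push_cast
    simp
  rw [this]

lemma hfun_sum : ∑ r ∈ Finset.range M, hfun a r = n := by
  have := Finset.card_eq_sum_card_fiberwise
    (s := (univ : Finset (Fin n))) (t := Finset.range M) (f := fun i => (a i).val)
    (fun i _ => Finset.mem_range.mpr (ZMod.val_lt (a i)))
  rw [Finset.card_univ, Fintype.card_fin] at this
  conv_rhs => rw [this]
  apply Finset.sum_congr rfl
  intro r hr
  simp only [Finset.mem_range] at hr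
  unfold hfun
  congr 1
  ext i
  simp only [Finset.mem_filter, Finset.mem_univ, true_and]
  constructor
  · intro h
    rw [h, ZMod.val_cast_of_lt hr]
  · intro h
    rw [← h, ZMod.natCast_rightInverse (a i)]

lemma Hfun_zero : Hfun a 0 = 0 := by simp [Hfun]

lemma Hfun_succ (t : ℕ) : Hfun a (t + 1) = Hfun a t + 1 - hfun a t := by
  unfold Hfun
  rw [Finset.sum_range_succ]
  push_cast
  ring

lemma Hfun_step_le (t : ℕ) : Hfun a (t + 1) ≤ Hfun a t + 1 := by
  rw [Hfun_succ]
  have : (0 : ℤ) ≤ hfun a t := Int.natCast_nonneg _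
  omega

lemma sum_window (t : ℕ) : ∑ r ∈ Finset.Ico t (t + M), (hfun a r : ℤ) = n := by
  induction t with
  | zero =>
    rw [show Finset.Ico 0 (0 + M) = Finset.range M by rw [Finset.range_eq_Ico]; congr 1; omega]
    exact_mod_cast congrArg (Nat.cast : ℕ → ℤ) (hfun_sum a)
  | succ t ih =>
    have hM : 1 ≤ M := Nat.one_le_iff_ne_zero.mpr (NeZero.ne M)
    have h1 : ∑ r ∈ Finset.Ico t (t + M), (hfun a r : ℤ) =
        (hfun a t : ℤ) + ∑ r ∈ Finset.Ico (t + 1) (t + M), (hfun a r : ℤ) :=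
      Finset.sum_eq_sum_Ico_succ_bot (by omega) _
    have h2 : ∑ r ∈ Finset.Ico (t + 1) (t + 1 + M), (hfun a r : ℤ) =
        (∑ r ∈ Finset.Ico (t + 1) (t + M), (hfun a r : ℤ)) + (hfun a (t + M) : ℤ) := by
      rw [show t + 1 + M = (t + M) + 1 by omega, Finset.sum_Ico_succ_top (by omega)]
    rw [h2, hfun_period]
    omega

lemma Hfun_period (t : ℕ) : Hfun a (t + M) = Hfun a t + ((M : ℤ) - n) := by
  unfold Hfun
  have : ∑ r ∈ Finset.range (t + M), (hfun a r : ℤ) =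
      ∑ r ∈ Finset.range t, (hfun a r : ℤ) + ∑ r ∈ Finset.Ico t (t + M), (hfun a r : ℤ) := by
    rw [Finset.range_eq_Ico, ← Finset.sum_Ico_consecutive _ (Nat.zero_le t) (by omega),
      Finset.range_eq_Ico]
  rw [this, sum_window]
  push_cast
  ring

lemma Hfun_exists (hn : n < M) (m : ℤ) : ∃ t, m ≤ Hfun a t := by
  refine ⟨m.toNat * M, ?_⟩
  have key : ∀ k : ℕ, Hfun a (k * M) = k * ((M : ℤ) - n) := by
    intro k
    induction k with
    | zero => simpa using Hfun_zero a
    | succ k ih =>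
      rw [show (k + 1) * M = k * M + M by ring, Hfun_period, ih]
      push_cast
      ring
  rw [key]
  have hs : (1 : ℤ) ≤ (M : ℤ) - n := by
    have : (n : ℤ) < M := by exact_mod_cast hn
    omega
  have h1 : m ≤ (m.toNat : ℤ) := Int.self_le_toNat m
  have h2 : (0 : ℤ) ≤ (m.toNat : ℤ) := Int.natCast_nonneg _
  nlinarith


noncomputable def maxH (a : Fin n → ZMod M) (t : ℕ) : ℤ :=
  ((Finset.range (t + 1)).image (Hfun a)).max'
    (Finset.Nonempty.image ⟨0, Finset.mem_range.mpr (by omega)⟩ _)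

lemma le_maxH {v t : ℕ} (hv : v ≤ t) : Hfun a v ≤ maxH a t :=
  Finset.le_max' _ _ (Finset.mem_image.mpr ⟨v, Finset.mem_range.mpr (by omega), rfl⟩)

lemma maxH_mem (t : ℕ) : ∃ v ≤ t, maxH a t = Hfun a v := by
  have := Finset.max'_mem ((Finset.range (t + 1)).image (Hfun a))
    (Finset.Nonempty.image ⟨0, Finset.mem_range.mpr (by omega)⟩ _)
  rw [Finset.mem_image] at this
  obtain ⟨v, hv, he⟩ := this
  exact ⟨v, by have := Finset.mem_range.mp hv; omega, he.symm⟩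

lemma maxH_nonneg (t : ℕ) : 0 ≤ maxH a t := by
  have := le_maxH a (Nat.zero_le t)
  rwa [Hfun_zero] at this

lemma maxH_period (hn : n < M) : maxH a (2 * M) = maxH a M + ((M : ℤ) - n) := by
  have hs : (0 : ℤ) ≤ (M : ℤ) - n := by
    have : (n : ℤ) < M := by exact_mod_cast hn
    omega
  apply le_antisymm
  · obtain ⟨v, hv, he⟩ := maxH_mem a (2 * M)
    rw [he]
    rcases le_or_gt v M with h | h
    · have := le_maxH a h (t := M)
      omega
    · have hvM : v - M ≤ M := by omega
      have heq : Hfun a v = Hfun a (v - M) + ((M : ℤ) - n) := by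
        conv_lhs => rw [show v = (v - M) + M by omega]
        exact Hfun_period a (v - M)
      rw [heq]
      have := le_maxH a hvM (t := M)
      omega
  · obtain ⟨v, hv, he⟩ := maxH_mem a M
    have : Hfun a (v + M) = Hfun a v + ((M : ℤ) - n) := Hfun_period a v
    have hle := le_maxH a (show v + M ≤ 2 * M by omega)
    omega

/-- first hitting time of level m -/
noncomputable def Tm (a : Fin n → ZMod M) (hn : n < M) (m : ℤ) : ℕ :=
  Nat.find (Hfun_exists a hn m)

lemma Tm_spec (hn : n < M) (m : ℤ) : m ≤ Hfun a (Tm a hn m) := Nat.find_spec (Hfun_exists a hn m)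

lemma Tm_min (hn : n < M) (m : ℤ) {v : ℕ} (hv : v < Tm a hn m) : Hfun a v < m := by
  have := Nat.find_min (Hfun_exists a hn m) hv
  omega

lemma Tm_le (hn : n < M) (m : ℤ) {v : ℕ} (hv : m ≤ Hfun a v) : Tm a hn m ≤ v :=
  Nat.find_min' _ hv

lemma Hfun_Tm (hn : n < M) (m : ℤ) (hm : 1 ≤ m) : Hfun a (Tm a hn m) = m := by
  have h1 := Tm_spec a hn m
  have hT : 1 ≤ Tm a hn m := by
    rcases Nat.eq_zero_or_pos (Tm a hn m) with h | h
    · rw [h, Hfun_zero] at h1; omega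
    · omega
  have h2 : Hfun a (Tm a hn m - 1) < m := Tm_min a hn m (by omega)
  have h3 := Hfun_step_le a (Tm a hn m - 1)
  rw [show Tm a hn m - 1 + 1 = Tm a hn m by omega] at h3
  omega


lemma cnt_fiber (u k : ℕ) (hk : k < M) :
    cnt a u k = ∑ j ∈ Finset.range (k + 1), hfun a (u + M - j) := by
  unfold cnt
  rw [Finset.card_eq_sum_card_fiberwise
    (f := fun i => ((u : ZMod M) - a i).val) (t := Finset.range (k + 1))
    (fun i hi => by
      have h2 := (Finset.mem_filter.mp hi).2
      show ((u : ZMod M) - a i).val ∈ Finset.range (k + 1)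
      simp only [Finset.mem_range]
      omega)]
  apply Finset.sum_congr rfl
  intro j hj
  have hjk : j ≤ k := by have := Finset.mem_range.mp hj; omega
  have hjM : j < M := by omega
  unfold hfun
  congr 1
  ext i
  simp only [Finset.mem_filter, Finset.mem_univ, true_and]
  have hcast : ((u + M - j : ℕ) : ZMod M) = (u : ZMod M) - (j : ZMod M) := by
    rw [Nat.cast_sub (by omega)]
    push_cast
    simp
  constructor
  · rintro ⟨-, h⟩
    rw [hcast]
    have : ((u : ZMod M) - a i) = (j : ZMod M) := by
      rw [← h, ZMod.natCast_rightInverse ((u : ZMod M) - a i)]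
    linear_combination -this
  · intro h
    rw [hcast] at h
    have h2 : (u : ZMod M) - a i = (j : ZMod M) := by linear_combination -h
    rw [h2, ZMod.val_cast_of_lt hjM]
    exact ⟨hjk, rfl⟩

lemma cnt_eq (hn : n < M) (u k : ℕ) (hk : k < M) :
    (cnt a u k : ℤ) = (k + 1 : ℤ) - (Hfun a (u + M + 1) - Hfun a (u + M - k)) := by
  rw [cnt_fiber a u k hk]
  have hsum : ∑ j ∈ Finset.range (k + 1), (hfun a (u + M - j) : ℤ) =
      ∑ r ∈ Finset.Ico (u + M - k) (u + M + 1), (hfun a r : ℤ) := by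
    apply Finset.sum_nbij' (i := fun j => u + M - j) (j := fun r => u + M - r)
    · intro j hj
      have := Finset.mem_range.mp hj
      rw [Finset.mem_Ico]
      omega
    · intro r hr
      have := Finset.mem_Ico.mp hr
      rw [Finset.mem_range]
      omega
    · intro j hj
      have := Finset.mem_range.mp hj
      omega
    · intro r hr
      have := Finset.mem_Ico.mp hr
      omega
    · intro j hj
      rfl
  have hdiff : Hfun a (u + M + 1) - Hfun a (u + M - k) =
      ((u + M + 1 : ℕ) : ℤ) - ((u + M - k : ℕ) : ℤ) -
        ∑ r ∈ Finset.Ico (u + M - k) (u + M + 1), (hfun a r : ℤ) := by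
    unfold Hfun
    have : ∑ r ∈ Finset.range (u + M + 1), (hfun a r : ℤ) =
        ∑ r ∈ Finset.range (u + M - k), (hfun a r : ℤ) +
          ∑ r ∈ Finset.Ico (u + M - k) (u + M + 1), (hfun a r : ℤ) := by
      rw [Finset.range_eq_Ico,
        ← Finset.sum_Ico_consecutive (fun r => (hfun a r : ℤ))
          (Nat.zero_le (u + M - k)) (show u + M - k ≤ u + M + 1 by omega),
          Finset.range_eq_Ico]
    rw [this]
    ring
  rw [← Nat.cast_sum] at hsum
  rw [hsum, hdiff]
  have h1 : ((u + M + 1 : ℕ) : ℤ) = (u : ℤ) + M + 1 := by push_cast; ring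
  have h2 : ((u + M - k : ℕ) : ℤ) = (u : ℤ) + M - k := by
    rw [Nat.cast_sub (by omega)]; push_cast; ring
  rw [h1, h2]
  ring

lemma cond_iff_rec (hn : n < M) (u : ℕ) (hu : u < M) :
    condN M a u ↔ ∀ v < u + M + 1, Hfun a v < Hfun a (u + M + 1) := by
  have hsZ : (n : ℤ) < M := by exact_mod_cast hn
  constructor
  · intro h
    have W : ∀ v, u < v → v ≤ u + M → Hfun a v < Hfun a (u + M + 1) := by
      intro v h1 h2
      have hkM : u + M - v < M := by omega
      have hc := h (u + M - v) (Finset.mem_range.mpr hkM)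
      have := cnt_eq a hn u (u + M - v) hkM
      rw [show u + M - (u + M - v) = v by omega] at this
      have hc' : (cnt a u (u + M - v) : ℤ) ≤ ((u + M - v : ℕ) : ℤ) := by exact_mod_cast hc
      have h3 : ((u + M - v : ℕ) : ℤ) = (u : ℤ) + M - v := by
        rw [Nat.cast_sub (by omega)]; push_cast; ring
      have h4 : (0 : ℤ) ≤ (cnt a u (u + M - v) : ℤ) := Int.natCast_nonneg _
      omega
    intro v hv
    rcases le_or_gt v u with hvu | hvu
    · have h1 : Hfun a v < Hfun a (v + M) := by
        rw [Hfun_period]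
        omega
      have h2 := W (v + M) (by omega) (by omega)
      omega
    · exact W v hvu (by omega)
  · intro h k hk
    have hkM := Finset.mem_range.mp hk
    have hrec := h (u + M - k) (by omega)
    have := cnt_eq a hn u k hkM
    have : (cnt a u k : ℤ) ≤ (k : ℤ) := by omega
    exact_mod_cast this

lemma count_records (hn : n < M) :
    ((Finset.range M).filter (fun u => condN M a u)).card = M - n := by
  have hsZ : (n : ℤ) < M := by exact_mod_cast hn
  have key : ((Finset.range M).filter (fun u => condN M a u)).card =
      (Finset.Ioc (maxH a M) (maxH a (2 * M))).card := by
    apply Finset.card_nbij' (i := fun u => Hfun a (u + M + 1))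
      (j := fun m => Tm a hn m - (M + 1))
    · intro u hu
      obtain ⟨huM, hcond⟩ := Finset.mem_filter.mp hu
      have huM' := Finset.mem_range.mp huM
      have hrec := (cond_iff_rec a hn u huM').mp hcond
      rw [Finset.mem_coe, Finset.mem_Ioc]
      constructor
      · obtain ⟨v, hv, he⟩ := maxH_mem a M
        rw [he]
        exact hrec v (by omega)
      · exact le_maxH a (by omega)
    · intro m hm
      obtain ⟨hm1, hm2⟩ := Finset.mem_Ioc.mp hm
      have hm0 : (1 : ℤ) ≤ m := by have := maxH_nonneg a M; omega
      have hTub : Tm a hn m ≤ 2 * M := by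
        obtain ⟨v, hv, he⟩ := maxH_mem a (2 * M)
        exact le_trans (Tm_le a hn m (he ▸ hm2)) hv
      have hTlb : M + 1 ≤ Tm a hn m := by
        by_contra hc
        push_neg at hc
        have h1 := Hfun_Tm a hn m hm0
        have h2 := le_maxH a (show Tm a hn m ≤ M by omega)
        omega
      rw [Finset.mem_coe, Finset.mem_filter, Finset.mem_range]
      beta_reduce
      refine ⟨by omega, ?_⟩
      rw [cond_iff_rec a hn _ (by omega), show Tm a hn m - (M + 1) + M + 1 = Tm a hn m by omega]
      intro v hv
      rw [Hfun_Tm a hn m hm0]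
      exact Tm_min a hn m hv
    · intro u hu
      obtain ⟨huM, hcond⟩ := Finset.mem_filter.mp hu
      have huM' := Finset.mem_range.mp huM
      have hrec := (cond_iff_rec a hn u huM').mp hcond
      have hle : Tm a hn (Hfun a (u + M + 1)) ≤ u + M + 1 := Tm_le a hn _ le_rfl
      have hge : ¬ (Tm a hn (Hfun a (u + M + 1)) < u + M + 1) := by
        intro hc
        have h1 := Tm_spec a hn (Hfun a (u + M + 1))
        have h2 := hrec _ hc
        omega
      beta_reduce
      omega
    · intro m hm
      obtain ⟨hm1, hm2⟩ := Finset.mem_Ioc.mp hm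
      have hm0 : (1 : ℤ) ≤ m := by have := maxH_nonneg a M; omega
      have hTlb : M + 1 ≤ Tm a hn m := by
        by_contra hc
        push_neg at hc
        have h1 := Hfun_Tm a hn m hm0
        have h2 := le_maxH a (show Tm a hn m ≤ M by omega)
        omega
      beta_reduce
      rw [show Tm a hn m - (M + 1) + M + 1 = Tm a hn m by omega]
      exact Hfun_Tm a hn m hm0
  rw [key, Int.card_Ioc, maxH_period a hn]
  omega


lemma cnt_shift (a : Fin n → ZMod M) (u k : ℕ) :
    cnt (fun i => a i - (u : ZMod M)) 0 k = cnt a u k := by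
  unfold cnt
  congr 1
  apply Finset.filter_congr
  intro i _
  have : ((0 : ℕ) : ZMod M) - (a i - (u : ZMod M)) = (u : ZMod M) - a i := by
    push_cast
    ring
  rw [this]

lemma card_cond_u (u : ℕ) :
    ((univ : Finset (Fin n → ZMod M)).filter (fun a => condN M a u)).card =
    ((univ : Finset (Fin n → ZMod M)).filter (fun a => condN M a 0)).card := by
  apply Finset.card_nbij' (i := fun a => fun i => a i - (u : ZMod M))
    (j := fun a => fun i => a i + (u : ZMod M))
  · intro a ha
    rw [Finset.mem_coe, Finset.mem_filter] at ha ⊢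
    refine ⟨Finset.mem_univ _, ?_⟩
    intro k hk
    rw [cnt_shift]
    exact ha.2 k hk
  · intro a ha
    rw [Finset.mem_coe, Finset.mem_filter] at ha ⊢
    refine ⟨Finset.mem_univ _, ?_⟩
    intro k hk
    have := cnt_shift (fun i => a i + (u : ZMod M)) u k
    simp only [add_sub_cancel_right] at this
    rw [← this]
    exact ha.2 k hk
  · intro a _
    funext i
    simp
  · intro a _
    funext i
    simp

lemma count_zero (hn : n < M) (hn1 : 1 ≤ n) :
    ((univ : Finset (Fin n → ZMod M)).filter (fun a => condN M a 0)).card =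
      M ^ (n - 1) * (M - n) := by
  have hM : 1 ≤ M := by omega
  have hswap : ∑ u ∈ Finset.range M, ((univ : Finset (Fin n → ZMod M)).filter
        (fun a => condN M a u)).card
      = ∑ a ∈ (univ : Finset (Fin n → ZMod M)),
        ((Finset.range M).filter (fun u => condN M a u)).card := by
    simp_rw [Finset.card_filter]
    exact Finset.sum_comm
  have h1 : ∑ u ∈ Finset.range M, ((univ : Finset (Fin n → ZMod M)).filter
        (fun a => condN M a u)).card
      = M * ((univ : Finset (Fin n → ZMod M)).filter (fun a => condN M a 0)).card := by
    rw [Finset.sum_congr rfl (fun u _ => card_cond_u u)]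
    rw [Finset.sum_const, Finset.card_range, smul_eq_mul]
  have h2 : ∑ a ∈ (univ : Finset (Fin n → ZMod M)),
        ((Finset.range M).filter (fun u => condN M a u)).card
      = M ^ n * (M - n) := by
    rw [Finset.sum_congr rfl (fun a _ => count_records a hn)]
    rw [Finset.sum_const, smul_eq_mul, Finset.card_univ]
    congr 1
    rw [Fintype.card_fun, ZMod.card, Fintype.card_fin]
  have key : M * ((univ : Finset (Fin n → ZMod M)).filter (fun a => condN M a 0)).card
      = M * (M ^ (n - 1) * (M - n)) := by
    rw [h1.symm, hswap, h2]
    rw [show M * (M ^ (n - 1) * (M - n)) = (M * M ^ (n - 1)) * (M - n) by ring]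
    congr 2
    rw [← pow_succ']
    congr 1
    omega
  exact Nat.eq_of_mul_eq_mul_left (by omega) key

end Cycle

def Cond (n M : ℕ) (c : Fin n → ℕ) : Prop :=
  ∀ j ∈ Finset.Icc 1 M, ((Finset.univ.filter (fun i => j ≤ c i)).card ≤ M - j)

instance (n M : ℕ) : DecidablePred (Cond n M) := fun c => by
  unfold Cond; infer_instance

open Finset in
theorem count_cond (n z : ℕ) (hn : 1 ≤ n) (hz : 1 ≤ z) :
    ((Fintype.piFinset fun _ : Fin n => Finset.Icc 1 (z - 1 + n)).filter
      (Cond n (z + n))).card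
    = z * (z + n) ^ (n - 1) := by
  set M := z + n with hM
  haveI : NeZero M := ⟨by omega⟩
  have hnM : n < M := by omega
  have hzM : z - 1 + n = M - 1 := by omega
  have hM1 : 1 ≤ M := by omega
  clear_value M
  rw [hzM]
  have key : ((Fintype.piFinset fun _ : Fin n => Finset.Icc 1 (M - 1)).filter
      (Cond n M)).card =
      ((univ : Finset (Fin n → ZMod M)).filter (fun a => condN M a 0)).card := by
    apply Finset.card_nbij' (i := fun (c : Fin n → ℕ) => fun i => ((c i : ℕ) : ZMod M))
      (j := fun (a : Fin n → ZMod M) => fun i => (a i).val)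
    · intro c hc
      rw [Finset.mem_coe, Finset.mem_filter] at hc
      obtain ⟨hmem, hcond⟩ := hc
      unfold Cond at hcond
      rw [Fintype.mem_piFinset] at hmem
      have hbd : ∀ (i : Fin n), 1 ≤ c i ∧ c i ≤ M - 1 := by
        intro i
        have := hmem i
        rw [Finset.mem_Icc] at this
        omega
      rw [Finset.mem_coe, Finset.mem_filter]
      refine ⟨Finset.mem_univ _, ?_⟩
      intro k hk
      rw [Finset.mem_range] at hk
      have hval : ∀ i, (((0 : ℕ) : ZMod M) - ((c i : ℕ) : ZMod M)).val = M - c i := by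
        intro i
        have hbi := hbd i
        have h1 : ((0 : ℕ) : ZMod M) - ((c i : ℕ) : ZMod M) = ((M - c i : ℕ) : ZMod M) := by
          rw [Nat.cast_zero, zero_sub, neg_eq_iff_add_eq_zero, ← Nat.cast_add,
            show c i + (M - c i) = M by omega]
          simp
        rw [h1, ZMod.val_cast_of_lt (by omega)]
      have hfc : (univ.filter (fun i => (((0 : ℕ) : ZMod M) - ((c i : ℕ) : ZMod M)).val ≤ k))
          = univ.filter (fun i => M - k ≤ c i) := by
        apply Finset.filter_congr
        intro i _
        rw [hval i]
        have := hbd i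
        constructor <;> intro <;> omega
      show cnt (fun i => ((c i : ℕ) : ZMod M)) 0 k ≤ k
      unfold cnt
      rw [hfc]
      have := hcond (M - k) (Finset.mem_Icc.mpr ⟨by omega, by omega⟩)
      omega
    · intro a ha
      rw [Finset.mem_coe, Finset.mem_filter] at ha
      obtain ⟨-, hcond⟩ := ha
      have hne : ∀ i, a i ≠ 0 := by
        intro i h0
        have := hcond 0 (Finset.mem_range.mpr (by omega))
        have hmem : i ∈ univ.filter (fun i => (((0 : ℕ) : ZMod M) - a i).val ≤ 0) := by
          rw [Finset.mem_filter]
          refine ⟨Finset.mem_univ _, ?_⟩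
          rw [h0]
          simp
        have hcard : 0 < cnt a 0 0 := Finset.card_pos.mpr ⟨i, hmem⟩
        omega
      have hval : ∀ i, 1 ≤ (a i).val ∧ (a i).val ≤ M - 1 := by
        intro i
        have h1 := ZMod.val_lt (a i)
        have h2 : (a i).val ≠ 0 := fun h => hne i ((ZMod.val_eq_zero (a i)).mp h)
        omega
      rw [Finset.mem_coe, Finset.mem_filter]
      constructor
      · rw [Fintype.mem_piFinset]
        intro i
        rw [Finset.mem_Icc]
        have := hval i
        omega
      · unfold Cond
        intro j hj
        rw [Finset.mem_Icc] at hj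
        show (univ.filter (fun i => j ≤ (a i).val)).card ≤ M - j
        have hk := hcond (M - j) (Finset.mem_range.mpr (by omega))
        unfold cnt at hk
        have hfc : (univ.filter (fun i => (((0 : ℕ) : ZMod M) - a i).val ≤ M - j))
            = univ.filter (fun i => j ≤ (a i).val) := by
          apply Finset.filter_congr
          intro i _
          rw [Nat.cast_zero, zero_sub, ZMod.neg_val, if_neg (hne i)]
          have := hval i
          constructor <;> intro <;> omega
        rw [hfc] at hk
        omega
    · intro c hc
      rw [Finset.mem_coe, Finset.mem_filter, Fintype.mem_piFinset] at hc
      funext i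
      have := hc.1 i
      rw [Finset.mem_Icc] at this
      exact ZMod.val_cast_of_lt (by omega)
    · intro a _
      funext i
      exact ZMod.natCast_rightInverse (a i)
  rw [key, count_zero hnM hn]
  rw [show M - n = z by omega]
  ring


lemma parkFold_unit (n z : ℕ) (c : Fin n → ℕ) :
    parkFold n (fun _ => 1) z c = myFold (z - 1 + n) (Finset.Ico 1 z) (List.ofFn c) := by
  unfold parkFold myFold
  rw [List.map_ofFn]
  have hsum : (∑ _i : Fin n, (1 : ℕ)) = n := by simp
  rw [hsum]
  rfl

open Finset in
lemma isps_iff_cond (n z : ℕ) (hn : 1 ≤ n) (hz : 1 ≤ z) (c : Fin n → ℕ)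
    (hbd : ∀ i, 1 ≤ c i ∧ c i ≤ z - 1 + n) :
    IsParkingSeq n (fun _ => 1) z c ↔ Cond n (z + n) c := by
  set N := z - 1 + n with hN
  unfold IsParkingSeq Cond
  rw [parkFold_unit]
  constructor
  · rintro ⟨-, h2⟩
    intro j hj
    rw [Finset.mem_Icc] at hj
    cases heq : myFold N (Finset.Ico 1 z) (List.ofFn c) with
    | none => exact absurd heq h2
    | some occ' =>
      have hcnt := (succ_bound N (List.ofFn c) _ _ heq).2 j
      rw [countP_ofFn] at hcnt
      have hfc : (univ.filter (fun i => decide (j ≤ c i) = true))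
          = univ.filter (fun i => j ≤ c i) := by
        apply Finset.filter_congr
        intro i _
        simp
      rw [hfc] at hcnt
      have hsub : (occ' \ Finset.Ico 1 z).filter (fun s => j ≤ s ∧ s ≤ N) ⊆
          Finset.Icc j N := by
        intro x hx
        rw [Finset.mem_filter] at hx
        rw [Finset.mem_Icc]
        exact hx.2
      have hcard := Finset.card_le_card hsub
      rw [Nat.card_Icc] at hcard
      omega
  · intro hC
    refine ⟨fun i => (hbd i).1, ?_⟩
    apply succ_of_K
    · intro x hx
      rw [Finset.mem_Ico] at hx
      rw [Finset.mem_Icc]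
      omega
    · intro x hx
      rw [List.mem_ofFn] at hx
      obtain ⟨i, rfl⟩ := hx
      exact (hbd i).1
    · intro a haN hnotin
      rw [Finset.mem_Ico] at hnotin
      rw [countP_ofFn]
      have hfc : (univ.filter (fun i => decide (a < c i) = true))
          = univ.filter (fun i => a + 1 ≤ c i) := by
        apply Finset.filter_congr
        intro i _
        simp only [decide_eq_true_eq]
        constructor <;> intro <;> omega
      rw [hfc]
      rcases (show a = 0 ∨ z ≤ a by omega) with rfl | haz
      · have h1 : ((Finset.Ico 1 z).filter (fun s => 0 < s)).card ≤ z - 1 := by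
          have := Finset.card_filter_le (Finset.Ico 1 z) (fun s => 0 < s)
          rwa [Nat.card_Ico] at this
        have h2 : (univ.filter (fun i => 0 + 1 ≤ c i)).card ≤ n := by
          have := Finset.card_filter_le (univ : Finset (Fin n)) (fun i => 0 + 1 ≤ c i)
          rwa [Finset.card_univ, Fintype.card_fin] at this
        omega
      · have h1 : (Finset.Ico 1 z).filter (fun s => a < s) = ∅ := by
          apply Finset.filter_false_of_mem
          intro x hx
          rw [Finset.mem_Ico] at hx
          omega
        rw [h1, Finset.card_empty]
        have h2 := hC (a + 1) (Finset.mem_Icc.mpr ⟨by omega, by omega⟩)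
        omega

/-- For `n` unit-size cars and a trailer of length `z - 1`, the number of parking
sequences equals `z(z+n)^(n-1)`. -/
theorem numPark_unit (n : ℕ) (hn : 1 ≤ n) (z : ℕ) (hz : 1 ≤ z) :
    numPark n (fun _ => 1) z = z * (z + n) ^ (n - 1) := by
  unfold numPark
  have hsum : (∑ _i : Fin n, (1 : ℕ)) = n := by simp
  rw [hsum]
  have hfe : (Fintype.piFinset fun _ : Fin n => Finset.Icc 1 (z - 1 + n)).filter
        (IsParkingSeq n (fun _ => 1) z)
      = (Fintype.piFinset fun _ : Fin n => Finset.Icc 1 (z - 1 + n)).filter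
        (Cond n (z + n)) := by
    apply Finset.filter_congr
    intro c hc
    rw [Fintype.mem_piFinset] at hc
    have hbd : ∀ i, 1 ≤ c i ∧ c i ≤ z - 1 + n := by
      intro i
      have := hc i
      rw [Finset.mem_Icc] at this
      exact this
    exact isps_iff_cond n z hn hz c hbd
  rw [hfe]
  exact count_cond n z hn hz
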